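/- For every level n of the Calkin-Wilf tree, the sum of all fractions at that level equals the sum of the values of the Minkowski question mark function applied to those fractions: ∑_{r ∈ F_n} r = ∑_{r ∈ F_n} ?(r). -/

import Mathlib

/-- Level `n+1` (in the paper's 1-based numbering) of the Calkin–Wilf tree:
`cwLevel 0 = [(1,1)]`, and each pair `(a,b)` is replaced by `(a,a+b), (a+b,b)`
in order to pass to the next level. -/
def cwLevel : ℕ → List (ℕ × ℕ)
  | 0 => [(1, 1)]
  | n + 1 => (cwLevel n).flatMap fun p => [(p.1, p.1 + p.2), (p.1 + p.2, p.2)]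
/-- The canonical continued fraction expansion `[a₀; a₁, ..., a_m]` of `a/b`,
computed by the Euclidean algorithm. -/
def cfNat : ℕ → ℕ → List ℕ
  | _, 0 => []
  | a, b + 1 => (a / (b + 1)) :: cfNat (b + 1) (a % (b + 1))
  termination_by a b => b
  decreasing_by exact Nat.lt_succ_iff.mpr (Nat.lt_succ_iff.mp (Nat.mod_lt _ (Nat.succ_pos b)))

/-- The Minkowski question mark function on (positive) rationals: if
`r = [a₀; a₁, ..., a_m]` is the continued fraction expansion of `r`, then
`?(r) = a₀ + 2 * ∑_{k=1}^{m} (−1)^{k+1} / 2^{a₁ + ⋯ + a_k}`. -/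
def mink (r : ℚ) : ℚ :=
  match cfNat r.num.toNat r.den with
  | [] => 0
  | _a0 :: rest =>
    (_a0 : ℚ) + 2 * ∑ k ∈ Finset.range rest.length,
      (-1 : ℚ) ^ k / 2 ^ ((rest.take (k + 1)).sum)

lemma cfNat_pos (a b : ℕ) (hb : 0 < b) : cfNat a b = (a / b) :: cfNat b (a % b) := by
  obtain ⟨c, rfl⟩ := Nat.exists_eq_add_of_lt hb
  simp [cfNat]

noncomputable def ff (L : List ℕ) : ℚ :=
  2 * ∑ k ∈ Finset.range L.length, (-1 : ℚ) ^ k / 2 ^ ((L.take (k + 1)).sum)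

lemma ff_cons (d : ℕ) (L : List ℕ) : ff (d :: L) = 2 / 2 ^ d - ff L / 2 ^ d := by
  unfold ff
  rw [List.length_cons, Finset.sum_range_succ']
  have h : ∀ k, (-1 : ℚ) ^ (k + 1) / 2 ^ (((d :: L).take (k + 1 + 1)).sum)
      = ((-1 : ℚ) ^ k / 2 ^ ((L.take (k + 1)).sum)) * (-1 / 2 ^ d) := by
    intro k
    simp only [List.take_succ_cons, List.sum_cons, pow_succ, pow_add]
    ring
  rw [Finset.sum_congr rfl fun k _ => h k, ← Finset.sum_mul]
  have h2 : (2 : ℚ) ^ d ≠ 0 := by positivity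
  simp only [List.take_succ_cons, List.take_zero, List.sum_cons, List.sum_nil, Nat.add_zero,
    pow_zero]
  field_simp
  ring

lemma ff_pair_le {a b : ℕ} (ha : 0 < a) (hb : 0 < b) (hab : a ≤ b) :
    ff (cfNat (a + b) a) + ff (cfNat (a + b) b) = 1 := by
  rcases eq_or_lt_of_le hab with rfl | hlt
  · have h1 : cfNat (a + a) a = [2] := by
      rw [cfNat_pos _ _ ha]
      have h1 : (a + a) / a = 2 := by
        rw [Nat.add_div_right _ ha, Nat.div_self ha]
      have h2 : (a + a) % a = 0 := by
        rw [Nat.add_mod_right, Nat.mod_self]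
      rw [h1, h2]
      simp [cfNat]
    rw [h1]
    norm_num [ff]
  · -- a < b
    have e1 : cfNat (a + b) b = 1 :: cfNat b a := by
      rw [cfNat_pos _ _ hb]
      congr 1
      · rw [Nat.add_div_right _ hb, Nat.div_eq_of_lt hlt]
      · rw [Nat.add_mod_right, Nat.mod_eq_of_lt hlt]
    have e2 : cfNat (a + b) a = (b / a + 1) :: cfNat a (b % a) := by
      rw [cfNat_pos _ _ ha]
      congr 1
      · rw [Nat.add_comm, Nat.add_div_right _ ha]
      · rw [Nat.add_comm, Nat.add_mod_right]
    have e3 : cfNat b a = (b / a) :: cfNat a (b % a) := cfNat_pos _ _ ha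
    rw [e1, e2, ff_cons, ff_cons, e3, ff_cons]
    have h2 : (2 : ℚ) ^ (b / a) ≠ 0 := by positivity
    rw [pow_succ]
    field_simp
    ring

lemma ff_pair {a b : ℕ} (ha : 0 < a) (hb : 0 < b) :
    ff (cfNat (a + b) a) + ff (cfNat (a + b) b) = 1 := by
  rcases le_total a b with hab | hab
  · exact ff_pair_le ha hb hab
  · rw [Nat.add_comm, add_comm]
    exact ff_pair_le hb ha hab

lemma mink_of_cf {r : ℚ} {d : ℕ} {L : List ℕ} (h : cfNat r.num.toNat r.den = d :: L) :
    mink r = (d : ℚ) + ff L := by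
  unfold mink
  rw [h]
  rfl

lemma mink_eq {a b : ℕ} (ha : 0 < a) (hb : 0 < b) (h : Nat.Coprime a b) :
    mink ((a : ℚ) / b) = ((a / b : ℕ) : ℚ) + ff (cfNat b (a % b)) := by
  have hb' : (0 : ℤ) < (b : ℤ) := by exact_mod_cast hb
  have hcop : (a : ℤ).natAbs.Coprime (b : ℤ).natAbs := by simpa using h
  have hnum : ((a : ℚ) / b).num = a := by
    have := Rat.num_div_eq_of_coprime hb' hcop
    push_cast at this
    exact this
  have hden : ((a : ℚ) / b).den = b := by
    have := Rat.den_div_eq_of_coprime hb' hcop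
    push_cast at this
    exact_mod_cast this
  apply mink_of_cf
  rw [hnum, hden, Int.toNat_natCast]
  exact cfNat_pos a b hb

lemma mink_right {a b : ℕ} (ha : 0 < a) (hb : 0 < b) (h : Nat.Coprime a b) :
    mink (((a + b : ℕ) : ℚ) / b) = 1 + mink ((a : ℚ) / b) := by
  have h' : Nat.Coprime (a + b) b := Nat.coprime_add_self_left.mpr h
  rw [mink_eq (by omega) hb h', mink_eq ha hb h,
    Nat.add_div_right _ hb, Nat.add_mod_right]
  push_cast
  ring

lemma mink_left_pair {a b : ℕ} (ha : 0 < a) (hb : 0 < b) (h : Nat.Coprime a b) :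
    mink ((a : ℚ) / ((a + b : ℕ) : ℚ)) + mink ((b : ℚ) / ((a + b : ℕ) : ℚ)) = 1 := by
  have h1 : Nat.Coprime a (a + b) := by
    rw [Nat.add_comm]
    exact Nat.coprime_add_self_right.mpr h
  have h2 : Nat.Coprime b (a + b) := Nat.coprime_add_self_right.mpr h.symm
  rw [mink_eq ha (by omega) h1, mink_eq hb (by omega) h2,
    Nat.div_eq_of_lt (by omega), Nat.div_eq_of_lt (by omega),
    Nat.mod_eq_of_lt (by omega), Nat.mod_eq_of_lt (by omega)]
  push_cast
  have := ff_pair ha hb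
  linarith

lemma cw_mem {n : ℕ} {p : ℕ × ℕ} (hp : p ∈ cwLevel n) :
    0 < p.1 ∧ 0 < p.2 ∧ Nat.Coprime p.1 p.2 := by
  induction n generalizing p with
  | zero =>
    simp only [cwLevel, List.mem_singleton] at hp
    subst hp
    exact ⟨one_pos, one_pos, Nat.coprime_one_left 1⟩
  | succ n ih =>
    simp only [cwLevel, List.mem_flatMap] at hp
    obtain ⟨q, hq, hpq⟩ := hp
    obtain ⟨h1, h2, h3⟩ := ih hq
    simp only [List.mem_cons, List.mem_singleton, List.not_mem_nil, or_false] at hpq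
    rcases hpq with rfl | rfl
    · refine ⟨h1, by omega, ?_⟩
      show Nat.Coprime q.1 (q.1 + q.2)
      rw [Nat.add_comm]
      exact Nat.coprime_add_self_right.mpr h3
    · refine ⟨by omega, h2, ?_⟩
      exact Nat.coprime_add_self_left.mpr h3

lemma sum_map_flat (l : List (ℕ × ℕ)) (g : ℕ × ℕ → ℚ) :
    ((l.flatMap fun p => [(p.1, p.1 + p.2), (p.1 + p.2, p.2)]).map g).sum
      = (l.map fun p => g (p.1, p.1 + p.2) + g (p.1 + p.2, p.2)).sum := by
  induction l with
  | nil => simp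
  | cons p l ih => simp [ih]; ring

lemma sum_map_add {α : Type*} (l : List α) (f g : α → ℚ) :
    (l.map fun x => f x + g x).sum = (l.map f).sum + (l.map g).sum := by
  induction l with
  | nil => simp
  | cons p l ih => simp [ih]; ring

lemma swap_sum (n : ℕ) (g : ℕ → ℕ → ℚ) :
    ((cwLevel n).map fun p => g p.1 p.2).sum = ((cwLevel n).map fun p => g p.2 p.1).sum := by
  induction n generalizing g with
  | zero => simp [cwLevel]
  | succ n ih =>
    show ((cwLevel (n+1)).map fun p => g p.1 p.2).sum = _
    rw [show cwLevel (n+1) = (cwLevel n).flatMap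
        fun p => [(p.1, p.1 + p.2), (p.1 + p.2, p.2)] from rfl]
    rw [sum_map_flat, sum_map_flat]
    simp only
    rw [ih fun a b => g a (a + b) + g (a + b) b]
    apply congrArg
    apply List.map_congr_left
    intro p _
    rw [Nat.add_comm p.2 p.1, add_comm]

lemma sum_map_flat' (l : List (ℕ × ℕ)) (g : ℕ → ℕ → ℚ) :
    ((l.flatMap fun p => [(p.1, p.1 + p.2), (p.1 + p.2, p.2)]).map fun p => g p.1 p.2).sum
      = (l.map fun p => g p.1 (p.1 + p.2) + g (p.1 + p.2) p.2).sum := by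
  induction l with
  | nil => simp
  | cons p l ih => simp [ih]; ring

/-- For every level of the Calkin–Wilf tree, the sum of all fractions at that
level equals the sum of the values of the Minkowski question mark function at
those fractions. -/
theorem cw_level_sum_eq_sum_mink (n : ℕ) :
    ((cwLevel n).map fun p => (p.1 : ℚ) / p.2).sum
      = ((cwLevel n).map fun p => mink ((p.1 : ℚ) / p.2)).sum := by
  induction n with
  | zero =>
    have h : mink (((1 : ℕ) : ℚ) / ((1 : ℕ) : ℚ)) = 1 := by
      rw [mink_eq one_pos one_pos (Nat.coprime_one_left 1)]
      norm_num [ff, cfNat]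
    simp only [cwLevel, List.map_cons, List.map_nil, List.sum_cons, List.sum_nil]
    rw [h]
    norm_num
  | succ n ih =>
    have e1 : ((cwLevel (n + 1)).map fun p => (p.1 : ℚ) / p.2).sum
        = ((cwLevel n).map fun p => ((p.1 : ℚ) / ((p.1 + p.2 : ℕ) : ℚ))
            + (((p.1 + p.2 : ℕ) : ℚ) / (p.2 : ℚ))).sum :=
      sum_map_flat' (cwLevel n) fun a b => (a : ℚ) / (b : ℚ)
    have e2 : ((cwLevel (n + 1)).map fun p => mink ((p.1 : ℚ) / p.2)).sum
        = ((cwLevel n).map fun p => mink ((p.1 : ℚ) / ((p.1 + p.2 : ℕ) : ℚ))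
            + mink (((p.1 + p.2 : ℕ) : ℚ) / (p.2 : ℚ))).sum :=
      sum_map_flat' (cwLevel n) fun a b => mink ((a : ℚ) / (b : ℚ))
    rw [e1, e2, sum_map_add, sum_map_add]
    -- Right children
    have hB : ((cwLevel n).map fun p => ((p.1 + p.2 : ℕ) : ℚ) / (p.2 : ℚ)).sum
        = ((cwLevel n).map fun p => 1 + (p.1 : ℚ) / p.2).sum := by
      apply congrArg
      apply List.map_congr_left
      intro p hp
      obtain ⟨h1, h2, _⟩ := cw_mem hp
      have h2' : (p.2 : ℚ) ≠ 0 := Nat.cast_ne_zero.mpr (by omega)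
      push_cast
      field_simp
      ring
    have hB' : ((cwLevel n).map fun p => mink (((p.1 + p.2 : ℕ) : ℚ) / (p.2 : ℚ))).sum
        = ((cwLevel n).map fun p => 1 + mink ((p.1 : ℚ) / p.2)).sum := by
      apply congrArg
      apply List.map_congr_left
      intro p hp
      obtain ⟨h1, h2, h3⟩ := cw_mem hp
      exact mink_right h1 h2 h3
    -- Left children
    have hs : ((cwLevel n).map fun p => (p.1 : ℚ) / ((p.1 + p.2 : ℕ) : ℚ)).sum
        = ((cwLevel n).map fun p => (p.2 : ℚ) / ((p.2 + p.1 : ℕ) : ℚ)).sum :=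
      swap_sum n fun a b => (a : ℚ) / ((a + b : ℕ) : ℚ)
    have hs' : ((cwLevel n).map fun p => mink ((p.1 : ℚ) / ((p.1 + p.2 : ℕ) : ℚ))).sum
        = ((cwLevel n).map fun p => mink ((p.2 : ℚ) / ((p.2 + p.1 : ℕ) : ℚ))).sum :=
      swap_sum n fun a b => mink ((a : ℚ) / ((a + b : ℕ) : ℚ))
    have hA2 : ((cwLevel n).map fun p => (p.1 : ℚ) / ((p.1 + p.2 : ℕ) : ℚ)).sum
          + ((cwLevel n).map fun p => (p.1 : ℚ) / ((p.1 + p.2 : ℕ) : ℚ)).sum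
        = ((cwLevel n).map fun _ => (1 : ℚ)).sum := by
      nth_rewrite 2 [hs]
      rw [← sum_map_add]
      apply congrArg
      apply List.map_congr_left
      intro p hp
      obtain ⟨h1, h2, _⟩ := cw_mem hp
      have hne : ((p.1 + p.2 : ℕ) : ℚ) ≠ 0 := Nat.cast_ne_zero.mpr (by omega)
      rw [Nat.add_comm p.2 p.1]
      field_simp
      exact (Nat.cast_add p.1 p.2).symm
    have hA2' : ((cwLevel n).map fun p => mink ((p.1 : ℚ) / ((p.1 + p.2 : ℕ) : ℚ))).sum
          + ((cwLevel n).map fun p => mink ((p.1 : ℚ) / ((p.1 + p.2 : ℕ) : ℚ))).sum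
        = ((cwLevel n).map fun _ => (1 : ℚ)).sum := by
      nth_rewrite 2 [hs']
      rw [← sum_map_add]
      apply congrArg
      apply List.map_congr_left
      intro p hp
      obtain ⟨h1, h2, h3⟩ := cw_mem hp
      rw [Nat.add_comm p.2 p.1]
      exact mink_left_pair h1 h2 h3
    have hA : ((cwLevel n).map fun p => (p.1 : ℚ) / ((p.1 + p.2 : ℕ) : ℚ)).sum
        = ((cwLevel n).map fun p => mink ((p.1 : ℚ) / ((p.1 + p.2 : ℕ) : ℚ))).sum := by
      linarith
    rw [hA, hB, hB', sum_map_add, sum_map_add, ih]
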